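/- Let H be a complex Hilbert space, A a bounded self-adjoint linear operator on H, and φ, ψ : ℝ → ℂ continuous functions. Let F : ℝ → ℝ be concave and monotone increasing on [0,∞) with F(0) = 0, such that |φ(t)|² = F(|ψ(t)|²) for all t ∈ ℝ. Then for every x ∈ H with x ≠ 0, ‖φ(A)x‖² ≤ ‖x‖² · F( ‖ψ(A)x‖² / ‖x‖² ). -/

import Mathlib

open Set

lemma support_line {F : ℝ → ℝ} (hFconc : ConcaveOn ℝ (Set.Ici 0) F)
    (hFmono : MonotoneOn F (Set.Ici 0)) {m : ℝ} (hm : 0 < m) :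
    ∃ c : ℝ, 0 ≤ c ∧ ∀ s ∈ Set.Ici (0:ℝ), F s ≤ F m + c * (s - m) := by
  set S : Set ℝ := (fun t => (F t - F m) / (t - m)) '' Set.Ioi m with hS
  have hmem : m ∈ Set.Ici (0:ℝ) := le_of_lt hm
  have hSne : S.Nonempty := ⟨_, ⟨m + 1, by simp, rfl⟩⟩
  have hbdd : BddAbove S := by
    refine ⟨(F m - F 0) / m, ?_⟩
    rintro _ ⟨t, ht, rfl⟩
    have := hFconc.slope_anti_adjacent (x := 0) (y := m) (z := t) (Set.self_mem_Ici)
      (Set.mem_Ici.mpr (le_of_lt (hm.trans ht))) hm ht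
    simpa using this
  set c := sSup S with hc
  have hslope_le : ∀ t ∈ Set.Ioi m, (F t - F m) / (t - m) ≤ c :=
    fun t ht => le_csSup hbdd ⟨t, ht, rfl⟩
  have hc0 : 0 ≤ c := by
    have h1 : (0:ℝ) ≤ (F (m+1) - F m) / (m + 1 - m) := by
      have := hFmono hmem (by simp; positivity : m + 1 ∈ Set.Ici (0:ℝ)) (by linarith)
      have h2 : m + 1 - m = 1 := by ring
      rw [h2]
      simpa using this
    exact h1.trans (hslope_le _ (by simp))
  refine ⟨c, hc0, fun s hs => ?_⟩
  rcases lt_trichotomy s m with h | h | h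
  · have hub : c ≤ (F m - F s) / (m - s) := by
      refine csSup_le hSne ?_
      rintro _ ⟨t, ht, rfl⟩
      exact hFconc.slope_anti_adjacent (x := s) (y := m) (z := t) hs
        (Set.mem_Ici.mpr ((Set.mem_Ici.mp hmem).trans (le_of_lt ht))) h ht
    have hms : 0 < m - s := by linarith
    have := (le_div_iff₀ hms).mp hub
    nlinarith
  · simp [h]
  · have := hslope_le s h
    have hsm : 0 < s - m := by linarith
    have := (div_le_iff₀ hsm).mp this
    linarith

/-- pairing monotonicity for cfc under a pointwise affine bound on the spectrum -/
lemma pairing_le {H : Type*} [NormedAddCommGroup H] [InnerProductSpace ℂ H] [CompleteSpace H]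
    (A : H →L[ℂ] H) (hA : IsSelfAdjoint A) (p r : ℝ → ℝ) (hp : Continuous p) (hr : Continuous r)
    (a c : ℝ) (h : ∀ t ∈ spectrum ℝ A, p t ≤ a + c * r t) (x : H) :
    RCLike.re (inner ℂ x (cfc p A x) : ℂ)
      ≤ a * ‖x‖ ^ 2 + c * RCLike.re (inner ℂ x (cfc r A x) : ℂ) := by
  have hle : cfc p A ≤ cfc (fun t => a + c * r t) A :=
    cfc_mono h (hp.continuousOn) (by fun_prop)
  have haff : cfc (fun t => a + c * r t) A
      = algebraMap ℝ (H →L[ℂ] H) a + c • cfc r A := by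
    rw [cfc_add (a := A) (fun _ => a) (fun t => c * r t) (by fun_prop) (by fun_prop),
      cfc_const a A hA, cfc_const_mul c r A (hr.continuousOn)]
  rw [haff] at hle
  have hpos := ((ContinuousLinearMap.nonneg_iff_isPositive _).mp (sub_nonneg.mpr hle))
  have h0 := hpos.re_inner_nonneg_right x
  rw [ContinuousLinearMap.sub_apply, inner_sub_right, map_sub] at h0
  have hexp : RCLike.re (inner ℂ x ((algebraMap ℝ (H →L[ℂ] H) a + c • cfc r A) x) : ℂ)
      = a * ‖x‖ ^ 2 + c * RCLike.re (inner ℂ x (cfc r A x) : ℂ) := by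
    have smul_re : ∀ (b : ℝ) (y : H),
        RCLike.re (inner ℂ x (b • y) : ℂ) = b * RCLike.re (inner ℂ x y : ℂ) := by
      intro b y
      rw [← algebraMap_smul ℂ b y, Complex.coe_algebraMap, inner_smul_right]
      simp [RCLike.re_to_complex, Complex.mul_re]
    rw [ContinuousLinearMap.add_apply, inner_add_right, map_add,
      Algebra.algebraMap_eq_smul_one]
    simp only [ContinuousLinearMap.smul_apply, ContinuousLinearMap.one_apply, smul_re,
      inner_self_eq_norm_sq (𝕜 := ℂ)]
  rw [hexp] at h0
  linarith

lemma norm_sq_cfc_eq {H : Type*} [NormedAddCommGroup H] [InnerProductSpace ℂ H] [CompleteSpace H]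
    (A : H →L[ℂ] H) (hA : IsSelfAdjoint A) (u : ℝ → ℂ) (hu : Continuous u) (x : H) :
    ‖cfc (fun z : ℂ => u z.re) A x‖ ^ 2
      = RCLike.re (inner ℂ x (cfc (fun t : ℝ => ‖u t‖ ^ 2) A x) : ℂ) := by
  have hcont : Continuous (fun z : ℂ => u z.re) := hu.comp Complex.continuous_re
  have h1 : cfc (fun t : ℝ => ‖u t‖ ^ 2) A
      = star (cfc (fun z : ℂ => u z.re) A) * cfc (fun z : ℂ => u z.re) A := by
    rw [cfc_real_eq_complex (fun t => ‖u t‖ ^ 2) hA, ← cfc_star, ← cfc_mul _ _ A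
      (by fun_prop) (hcont.continuousOn)]
    exact cfc_congr fun z _ => by
      rw [RCLike.star_def, RCLike.conj_mul]
      norm_cast
  rw [h1, ContinuousLinearMap.mul_apply, ContinuousLinearMap.star_eq_adjoint,
    ContinuousLinearMap.adjoint_inner_right, inner_self_eq_norm_sq (𝕜 := ℂ)]

/-- **Multiplicative Hardy–Littlewood–Pólya type inequality for functions of a
self-adjoint operator.** Here `g(A)` is encoded by applying the continuous
functional calculus of the self-adjoint operator `A` to `z ↦ g(Re z)` (which
agrees with `g` on the real spectrum of `A`). If `|φ(t)|² = F(|ψ(t)|²)` with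
`F` concave, monotone increasing on `[0,∞)` and `F(0) = 0`, then for `x ≠ 0`,
`‖φ(A)x‖² ≤ ‖x‖² · F(‖ψ(A)x‖² / ‖x‖²)`. -/
theorem hlp_multiplicative_for_operator_functions
    {H : Type*} [NormedAddCommGroup H] [InnerProductSpace ℂ H] [CompleteSpace H]
    (A : H →L[ℂ] H) (hA : IsSelfAdjoint A)
    (φ ψ : ℝ → ℂ) (hφ : Continuous φ) (hψ : Continuous ψ)
    (F : ℝ → ℝ) (hFconc : ConcaveOn ℝ (Set.Ici 0) F)
    (hFmono : MonotoneOn F (Set.Ici 0)) (hF0 : F 0 = 0)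
    (hFφψ : ∀ t : ℝ, ‖φ t‖ ^ 2 = F (‖ψ t‖ ^ 2))
    (x : H) (hx : x ≠ 0) :
    ‖cfc (fun z : ℂ => φ z.re) A x‖ ^ 2
      ≤ ‖x‖ ^ 2 * F (‖cfc (fun z : ℂ => ψ z.re) A x‖ ^ 2 / ‖x‖ ^ 2) := by
  set q : ℝ → ℝ := fun t => ‖φ t‖ ^ 2 with hq
  set g : ℝ → ℝ := fun t => ‖ψ t‖ ^ 2 with hg
  have hqc : Continuous q := by fun_prop
  have hgc : Continuous g := by fun_prop
  have hg0 : ∀ t, 0 ≤ g t := fun t => by positivity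
  have hx2 : (0:ℝ) < ‖x‖ ^ 2 := by have := norm_pos_iff.mpr hx; positivity
  have key1 := norm_sq_cfc_eq A hA φ hφ x
  have key2 := norm_sq_cfc_eq A hA ψ hψ x
  set P : ℝ := RCLike.re (inner ℂ x (cfc q A x) : ℂ) with hP
  set Q : ℝ := RCLike.re (inner ℂ x (cfc g A x) : ℂ) with hQ
  rw [key1, key2]
  set m : ℝ := Q / ‖x‖ ^ 2 with hm
  have hQ0 : 0 ≤ Q := by rw [← key2]; positivity
  have hm0 : 0 ≤ m := div_nonneg hQ0 hx2.le
  rcases hm0.lt_or_eq with hmpos | hmzero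
  · -- m > 0 : supporting line at m
    obtain ⟨c, hc0, hcs⟩ := support_line hFconc hFmono hmpos
    have hb : ∀ t ∈ spectrum ℝ A, q t ≤ (F m - c * m) + c * g t := by
      intro t _
      have := hcs (g t) (hg0 t)
      rw [hq]
      dsimp only
      rw [hFφψ t]
      linarith
    have := pairing_le A hA q g hqc hgc (F m - c * m) c hb x
    rw [← hP, ← hQ] at this
    have hQm : Q = m * ‖x‖ ^ 2 := by
      rw [hm, div_mul_cancel₀ _ (ne_of_gt hx2)]
    nlinarith
  · -- m = 0 : Q = 0
    have hQzero : Q = 0 := by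
      have : Q = m * ‖x‖ ^ 2 := by rw [hm, div_mul_cancel₀ _ (ne_of_gt hx2)]
      rw [this, ← hmzero, zero_mul]
    have hFm : F m = 0 := by rw [← hmzero, hF0]
    rw [hFm, mul_zero]
    -- show P ≤ ε * ‖x‖² for all ε > 0
    have hkey : ∀ ε : ℝ, 0 < ε → P ≤ ε * ‖x‖ ^ 2 := by
      intro ε hε
      set V : Set ℝ := spectrum ℝ A ∩ q ⁻¹' (Set.Ici ε) with hV
      have hVcomp : IsCompact V :=
        (spectrum.isCompact (𝕜 := ℝ) A).inter_right (isClosed_Ici.preimage hqc)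
      rcases V.eq_empty_or_nonempty with hVe | hVne
      · have hb : ∀ t ∈ spectrum ℝ A, q t ≤ ε + 0 * g t := by
          intro t ht
          have hlt : q t < ε := by
            by_contra hcon
            push_neg at hcon
            have hmem : t ∈ V := ⟨ht, hcon⟩
            rw [hVe] at hmem
            exact hmem
          linarith
        have := pairing_le A hA q g hqc hgc ε 0 hb x
        rw [← hP, ← hQ, hQzero] at this
        linarith
      · obtain ⟨t₀, ht₀V, hmin⟩ := hVcomp.exists_isMinOn hVne hgc.continuousOn
        obtain ⟨t₁, ht₁V, hmax⟩ := hVcomp.exists_isMaxOn hVne hqc.continuousOn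
        set δ : ℝ := g t₀ with hδ
        set C : ℝ := q t₁ with hC
        have hεt₀ : ε ≤ q t₀ := ht₀V.2
        have hδpos : 0 < δ := by
          rcases (hg0 t₀).lt_or_eq with h | h
          · exact h
          · exfalso
            have : q t₀ = F (g t₀) := hFφψ t₀
            rw [← h, hF0] at this
            linarith
        have hCpos : 0 < C := lt_of_lt_of_le hε (hεt₀.trans (hmax ht₀V))
        have hb : ∀ t ∈ spectrum ℝ A, q t ≤ ε + (C / δ) * g t := by
          intro t ht
          by_cases htV : t ∈ V
          · have h1 : q t ≤ C := hmax htV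
            have h2 : δ ≤ g t := hmin htV
            have h3 : C = (C / δ) * δ := by field_simp
            have h4 : (C / δ) * δ ≤ (C / δ) * g t :=
              mul_le_mul_of_nonneg_left h2 (by positivity)
            linarith
          · have : q t < ε := by
              by_contra hcon
              push_neg at hcon
              exact htV (Set.mem_inter ht hcon)
            have : (0:ℝ) ≤ (C / δ) * g t := by
              have := hg0 t
              positivity
            linarith
        have := pairing_le A hA q g hqc hgc ε (C / δ) hb x
        rw [← hP, ← hQ, hQzero] at this
        linarith
    have hP0 : P ≤ 0 := by
      by_contra hcon
      push_neg at hcon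
      have := hkey (P / (2 * ‖x‖ ^ 2)) (by positivity)
      have h2 : (P / (2 * ‖x‖ ^ 2)) * ‖x‖ ^ 2 = P / 2 := by
        field_simp
      rw [h2] at this
      linarith
    exact hP0
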